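/- Let I be a finite interval (a finite totally ordered set with least element b and greatest element t > b), and let G = (ℤ × I)/∼ (identifying (n,t) with (n+1,b)) with the lexicographic order. Then there is exactly one group law on G such that the order is left-invariant and (n,b)·(m,u) = (m,u)·(n,b) = (n+m,u) for all n,m ∈ ℤ, u ∈ I; this group is isomorphic as an ordered group to ℤ. -/

import Mathlib

/-- The ordered set `G = (ℤ × I)/∼` (identifying `(n,t) ∼ (n+1,b)`), realized as
`ℤ ×ₗ (I \ {t})` with the lexicographic order. -/
abbrev GlexI (I : Type*) (t : I) := Lex (ℤ × {u : I // u ≠ t})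

/-- `mul` is a group law on `G = (ℤ × I)/∼` with left-invariant order and
`(n,b)·(m,u) = (m,u)·(n,b) = (n+m,u)`. -/
def GoodMul (I : Type*) [LinearOrder I] (b t : I) (hbt : b ≠ t)
    (mul : GlexI I t → GlexI I t → GlexI I t) : Prop :=
  (∃ e : GlexI I t, ∃ inv : GlexI I t → GlexI I t,
    (∀ x y z, mul (mul x y) z = mul x (mul y z)) ∧
    (∀ x, mul e x = x) ∧ (∀ x, mul x e = x) ∧ (∀ x, mul (inv x) x = e)) ∧
  (∀ k g h : GlexI I t, g ≤ h → mul k g ≤ mul k h) ∧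
  (∀ (n m : ℤ) (u : {u : I // u ≠ t}),
    mul (toLex (n, (⟨b, hbt⟩ : {u : I // u ≠ t}))) (toLex (m, u)) = toLex (n + m, u) ∧
    mul (toLex (m, u)) (toLex (n, (⟨b, hbt⟩ : {u : I // u ≠ t}))) = toLex (n + m, u))

/-- A strictly monotone surjection `ℤ → ℤ` is a translation. -/
private lemma psi_translation (ψ : ℤ → ℤ) (h1 : StrictMono ψ)
    (h2 : Function.Surjective ψ) : ∀ m, ψ m = m + ψ 0 := by
  have step : ∀ n : ℤ, ψ (n + 1) = ψ n + 1 := by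
    intro n
    have hlt := h1 (lt_add_one n)
    by_contra hne
    have hgt : ψ n + 1 < ψ (n + 1) := by omega
    obtain ⟨m, hm⟩ := h2 (ψ n + 1)
    rcases le_or_gt m n with h' | h'
    · have := h1.monotone h'; omega
    · have : n + 1 ≤ m := h'
      have := h1.monotone this; omega
  intro m
  induction m using Int.induction_on with
  | zero => simp
  | succ n ih =>
      have := step (n : ℤ)
      push_cast at ih ⊢
      linarith
  | pred n ih =>
      have := step (-(n : ℤ) - 1)
      push_cast at ih ⊢
      have h : (-(n : ℤ) - 1) + 1 = -(n : ℤ) := by ring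
      rw [h] at this
      linarith

/-- For a finite interval `I`, there is exactly one group law on `G = (ℤ × I)/∼` with
left-invariant lexicographic order and the prescribed central `ℤ`; the resulting ordered
group is isomorphic to `ℤ`. -/
theorem stmt12 (I : Type*) [LinearOrder I] [Finite I] (b t : I)
    (hb : ∀ x : I, b ≤ x) (ht : ∀ x : I, x ≤ t) (hbt : b ≠ t) :
    (∃ mul, GoodMul I b t hbt mul) ∧
    (∀ mul₁ mul₂, GoodMul I b t hbt mul₁ → GoodMul I b t hbt mul₂ → mul₁ = mul₂) ∧
    (∀ mul, GoodMul I b t hbt mul →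
      ∃ φ : GlexI I t ≃o ℤ, ∀ x y, φ (mul x y) = φ x + φ y) := by
  classical
  haveI : Fintype I := Fintype.ofFinite I
  haveI : Nonempty {u : I // u ≠ t} := ⟨⟨b, hbt⟩⟩
  set k : ℕ := Fintype.card {u : I // u ≠ t} with hk
  have hk1 : 1 ≤ (k : ℤ) := by exact_mod_cast Fintype.card_pos
  let ι : {u : I // u ≠ t} ≃o Fin k := (monoEquivOfFin {u : I // u ≠ t} rfl).symm
  -- the index of `b` is `0`
  have hιb : (ι ⟨b, hbt⟩ : ℕ) = 0 := by
    have hle : ∀ j : Fin k, ι ⟨b, hbt⟩ ≤ j := by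
      intro j
      have : (⟨b, hbt⟩ : {u : I // u ≠ t}) ≤ ι.symm j := hb _
      simpa using ι.le_iff_le.mpr this
    exact Nat.le_zero.mp (hle ⟨0, by exact_mod_cast hk1⟩)
  -- the order isomorphism with ℤ
  let f : GlexI I t → ℤ := fun x => (ofLex x).1 * k + ((ι (ofLex x).2 : ℕ) : ℤ)
  have hbound : ∀ u : {u : I // u ≠ t}, ((ι u : ℕ) : ℤ) < k := by
    intro u; exact_mod_cast (ι u).isLt
  have hbound0 : ∀ u : {u : I // u ≠ t}, 0 ≤ ((ι u : ℕ) : ℤ) := fun u => Int.natCast_nonneg _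
  have hfmono : StrictMono f := by
    intro x y hxy
    rcases Prod.Lex.lt_iff.mp hxy with h | ⟨h1, h2⟩
    · have h' : (ofLex x).1 + 1 ≤ (ofLex y).1 := h
      have := mul_le_mul_of_nonneg_right h' (by linarith : (0:ℤ) ≤ (k:ℤ))
      have b1 := hbound (ofLex x).2
      have b2 := hbound0 (ofLex y).2
      simp only [f]
      nlinarith
    · have : ι (ofLex x).2 < ι (ofLex y).2 := ι.lt_iff_lt.mpr h2
      have : ((ι (ofLex x).2 : ℕ) : ℤ) < ((ι (ofLex y).2 : ℕ) : ℤ) := by exact_mod_cast this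
      simp only [f, h1]
      linarith
  have hfsurj : Function.Surjective f := by
    intro m
    have hkne : (k : ℤ) ≠ 0 := by linarith
    have hr0 : 0 ≤ m % k := Int.emod_nonneg m hkne
    have hrk : m % k < k := Int.emod_lt_of_pos m (by linarith)
    have hrn : (m % k).toNat < k := by omega
    refine ⟨toLex (m / k, ι.symm ⟨(m % k).toNat, hrn⟩), ?_⟩
    simp only [f, ofLex_toLex]
    rw [ι.apply_symm_apply]
    simp only [Fin.val_mk]
    rw [Int.toNat_of_nonneg hr0]
    linarith [Int.mul_ediv_add_emod m k]
  let φ : GlexI I t ≃o ℤ := StrictMono.orderIsoOfSurjective f hfmono hfsurj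
  have hφ : ∀ x, φ x = f x := fun x => by
    rw [show (φ : GlexI I t → ℤ) = f from StrictMono.coe_orderIsoOfSurjective f hfmono hfsurj]
  have hφpair : ∀ (n : ℤ) (u : {u : I // u ≠ t}),
      φ (toLex (n, u)) = n * k + ((ι u : ℕ) : ℤ) := fun n u => hφ _
  have hφb : ∀ n : ℤ, φ (toLex (n, ⟨b, hbt⟩)) = n * k := by
    intro n; rw [hφpair, hιb]; simp
  -- key: any good multiplication is sent to addition by φ
  have key : ∀ mul, GoodMul I b t hbt mul → ∀ x y, φ (mul x y) = φ x + φ y := by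
    rintro mul ⟨⟨e, inv, A, Lid, Rid, Linv⟩, Mono, Cen⟩ x y
    -- right inverse
    have Rinv : ∀ g, mul g (inv g) = e := by
      intro g
      calc mul g (inv g) = mul e (mul g (inv g)) := (Lid _).symm
        _ = mul (mul (inv (inv g)) (inv g)) (mul g (inv g)) := by rw [Linv]
        _ = mul (inv (inv g)) (mul (inv g) (mul g (inv g))) := A _ _ _
        _ = mul (inv (inv g)) (mul (mul (inv g) g) (inv g)) := by rw [A]
        _ = mul (inv (inv g)) (mul e (inv g)) := by rw [Linv]
        _ = mul (inv (inv g)) (inv g) := by rw [Lid]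
        _ = e := Linv _
    -- `toLex (0, b)` is a right identity
    have Rid0 : ∀ g, mul g (toLex (0, ⟨b, hbt⟩)) = g := by
      intro g
      have := (Cen 0 (ofLex g).1 (ofLex g).2).2
      rw [zero_add] at this
      simpa using this
    have hφz : φ.symm 0 = toLex (0, (⟨b, hbt⟩ : {u : I // u ≠ t})) := by
      rw [OrderIso.symm_apply_eq, hφb]; ring
    -- left multiplication is injective and surjective
    have hinj : ∀ g, Function.Injective (mul g) := by
      intro g a a' h
      have h2 := congrArg (mul (inv g)) h
      rwa [← A, ← A, Linv, Lid, Lid] at h2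
    have hsurj : ∀ g, Function.Surjective (mul g) := by
      intro g z
      exact ⟨mul (inv g) z, by rw [← A, Rinv, Lid]⟩
    -- conclude via the translation lemma
    have main : ∀ g z, φ (mul g z) = φ z + φ g := by
      intro g z
      set ψ : ℤ → ℤ := fun m => φ (mul g (φ.symm m)) with hψ
      have hψmono : StrictMono ψ := by
        have hmon : Monotone ψ := fun a a' h =>
          φ.le_iff_le.mpr (Mono g _ _ (φ.symm.le_iff_le.mpr h))
        exact hmon.strictMono_of_injective
          (fun a a' h => by
            have := hinj g (φ.injective h)
            exact φ.symm.injective this)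
      have hψsurj : Function.Surjective ψ := by
        intro m
        obtain ⟨w, hw⟩ := hsurj g (φ.symm m)
        exact ⟨φ w, by simp [ψ, hw]⟩
      have h0 : φ (mul g (φ.symm 0)) = φ g := by
        rw [hφz, Rid0]
      have := psi_translation ψ hψmono hψsurj (φ z)
      simp only [ψ, φ.symm_apply_apply] at this
      rw [this, h0]
    rw [main x y, add_comm]
  refine ⟨?_, ?_, ?_⟩
  · -- existence
    refine ⟨fun x y => φ.symm (φ x + φ y), ⟨φ.symm 0, fun x => φ.symm (-φ x),
      ?_, ?_, ?_, ?_⟩, ?_, ?_⟩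
    · intro x y z; simp [add_assoc]
    · intro x; simp
    · intro x; simp
    · intro x; simp
    · intro k' g h hgh
      exact φ.symm.le_iff_le.mpr (by simpa using φ.le_iff_le.mpr hgh)
    · intro n m u
      constructor <;>
      · rw [OrderIso.symm_apply_eq, hφb, hφpair, hφpair]; ring
  · -- uniqueness
    intro mul₁ mul₂ h1 h2
    funext x y
    exact φ.injective ((key mul₁ h1 x y).trans (key mul₂ h2 x y).symm)
  · -- isomorphism
    intro mul h
    exact ⟨φ, key mul h⟩
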